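/- arXiv:math/0311230 — 13 statements merged into one kernel-verified Lean document; each statement's English description precedes it below -/
import Mathlib

section
/- If m = λ₀ + λ₁ + ⋯ + λₙ is a weakM-partition of m (i.e., the set of all subpartition sums {∑_{i∈I} λᵢ : I ⊆ {0,…,n}} equals {0,1,…,m}), then λᵢ ≤ 1 + λ₀ + ⋯ + λ_{i-1} for all i ≤ n. -/
/-- If m = λ₀ + ⋯ + λₙ is a weakM-partition of m, then
λᵢ ≤ 1 + λ₀ + ⋯ + λ_{i-1} for all i ≤ n. -/
theorem weakM_part_bound (m n : ℕ) (lam : ℕ → ℕ)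
    (hpos : ∀ i ≤ n, 0 < lam i)
    (hmono : ∀ i j, i ≤ j → j ≤ n → lam i ≤ lam j)
    (hsum : ∑ i ∈ Finset.range (n + 1), lam i = m)
    (hweak : ∀ l ≤ m, ∃ I ⊆ Finset.range (n + 1), ∑ i ∈ I, lam i = l) :
    ∀ i ≤ n, lam i ≤ 1 + ∑ j ∈ Finset.range i, lam j := by
  intro i hi
  by_contra h
  push_neg at h
  set S := ∑ j ∈ Finset.range i, lam j with hS
  -- m ≥ S + lam i
  have hsub : Finset.range (i + 1) ⊆ Finset.range (n + 1) := by
    exact Finset.range_subset_range.mpr (by omega)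
  have hm : S + lam i ≤ m := by
    rw [← hsum]
    calc S + lam i = ∑ j ∈ Finset.range (i + 1), lam j := (Finset.sum_range_succ lam i).symm
      _ ≤ _ := Finset.sum_le_sum_of_subset hsub
  have hl : S + 1 ≤ m := by
    have := hpos i hi
    omega
  obtain ⟨I, hI, hIsum⟩ := hweak (S + 1) hl
  by_cases hcase : I ⊆ Finset.range i
  · have : ∑ j ∈ I, lam j ≤ S := Finset.sum_le_sum_of_subset hcase
    omega
  · obtain ⟨j, hjI, hjn⟩ : ∃ j ∈ I, j ∉ Finset.range i := by
      by_contra hc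
      push_neg at hc
      exact hcase hc
    have hji : i ≤ j := by simpa using hjn
    have hjle : j ≤ n := by
      have := hI hjI
      simp at this
      omega
    have h1 : lam i ≤ lam j := hmono i j hji hjle
    have h2 : lam j ≤ ∑ k ∈ I, lam k := Finset.single_le_sum (fun k _ => Nat.zero_le _) hjI
    omega
end

section
/- If m = λ₀ + λ₁ + ⋯ + λₙ is a weakM-partition of m, then n ≥ ⌊log₂ m⌋. -/
/-- If m = λ₀ + ⋯ + λₙ is a weakM-partition of m, then n ≥ ⌊log₂ m⌋. -/
theorem weakM_parts_lower_bound (m n : ℕ) (hm : 0 < m) (lam : ℕ → ℕ)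
    (hpos : ∀ i ≤ n, 0 < lam i)
    (hmono : ∀ i j, i ≤ j → j ≤ n → lam i ≤ lam j)
    (hsum : ∑ i ∈ Finset.range (n + 1), lam i = m)
    (hweak : ∀ l ≤ m, ∃ I ⊆ Finset.range (n + 1), ∑ i ∈ I, lam i = l) :
    n ≥ Nat.log 2 m := by
  -- Key lemma: lam k ≤ (sum of previous parts) + 1
  have key : ∀ k ≤ n, lam k ≤ ∑ i ∈ Finset.range k, lam i + 1 := by
    intro k hk
    set S := ∑ i ∈ Finset.range k, lam i with hS
    have hSm : S + 1 ≤ m := by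
      have h1 : ∑ i ∈ Finset.range (k + 1), lam i ≤ m := by
        rw [← hsum]
        exact Finset.sum_le_sum_of_subset (Finset.range_subset_range.2 (by omega))
      rw [Finset.sum_range_succ] at h1
      have := hpos k hk
      omega
    obtain ⟨I, hI, hsumI⟩ := hweak (S + 1) hSm
    by_cases h : ∃ i ∈ I, k ≤ i
    · obtain ⟨i, hiI, hki⟩ := h
      have hin : i ≤ n := by
        have := hI hiI
        simp [Finset.mem_range] at this
        omega
      calc lam k ≤ lam i := hmono k i hki hin
        _ ≤ ∑ j ∈ I, lam j := Finset.single_le_sum (fun _ _ => Nat.zero_le _) hiI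
        _ = S + 1 := hsumI
    · push_neg at h
      have hIk : I ⊆ Finset.range k := fun i hi =>
        Finset.mem_range.2 (h i hi)
      have : ∑ i ∈ I, lam i ≤ S :=
        Finset.sum_le_sum_of_subset hIk
      omega
  -- Inductive bound: sum of first k+1 parts + 1 ≤ 2^(k+1)
  have bound : ∀ k ≤ n, ∑ i ∈ Finset.range (k + 1), lam i + 1 ≤ 2 ^ (k + 1) := by
    intro k hk
    induction k with
    | zero =>
      have := key 0 (by omega)
      simp at this ⊢
      omega
    | succ k ih =>
      have ihk := ih (by omega)
      have hkey := key (k + 1) hk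
      rw [Finset.sum_range_succ]
      have : (2:ℕ) ^ (k + 2) = 2 ^ (k + 1) + 2 ^ (k + 1) := by ring
      omega
  have hmlt : m < 2 ^ (n + 1) := by
    have := bound n le_rfl
    omega
  have := Nat.log_lt_of_lt_pow hm.ne' hmlt
  omega
end

section
/- Every M-partition of a positive integer m has exactly ⌊log₂ m⌋ + 1 parts. -/
lemma two_pow_sum_aux (k : ℕ) : ∑ i ∈ Finset.range k, 2 ^ i = 2 ^ k - 1 := by
  induction k with
  | zero => simp
  | succ k ih =>
    rw [Finset.sum_range_succ, ih]
    have : 0 < 2 ^ k := Nat.pow_pos (by norm_num)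
    have : 2 ^ (k + 1) = 2 * 2 ^ k := by ring
    omega

lemma bin_rep_aux (t : ℕ) : ∀ l < 2 ^ t, ∃ J ⊆ Finset.range t, ∑ i ∈ J, 2 ^ i = l := by
  induction t with
  | zero =>
    intro l hl
    interval_cases l
    exact ⟨∅, by simp⟩
  | succ t ih =>
    intro l hl
    by_cases h : l < 2 ^ t
    · obtain ⟨J, hJ, hJs⟩ := ih l h
      exact ⟨J, hJ.trans (Finset.range_subset_range.2 (Nat.le_succ t)), hJs⟩
    · have h2 : 2 ^ (t + 1) = 2 * 2 ^ t := by ring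
      obtain ⟨J, hJ, hJs⟩ := ih (l - 2 ^ t) (by omega)
      refine ⟨insert t J, ?_, ?_⟩
      · intro x hx
        rcases Finset.mem_insert.1 hx with rfl | hx
        · exact Finset.self_mem_range_succ x
        · exact Finset.range_subset_range.2 (Nat.le_succ t) (hJ hx)
      · have ht : t ∉ J := fun h => by simpa using hJ h
        rw [Finset.sum_insert ht, hJs]
        omega

/-- Every M-partition of a positive integer m has exactly
⌊log₂ m⌋ + 1 parts.  An M-partition is a weakM-partition with a minimal
number of parts. -/
theorem M_partition_number_of_parts (m n : ℕ) (hm : 0 < m) (lam : ℕ → ℕ)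
    (hpos : ∀ i ≤ n, 0 < lam i)
    (hmono : ∀ i j, i ≤ j → j ≤ n → lam i ≤ lam j)
    (hsum : ∑ i ∈ Finset.range (n + 1), lam i = m)
    (hweak : ∀ l ≤ m, ∃ I ⊆ Finset.range (n + 1), ∑ i ∈ I, lam i = l)
    (hmin : ∀ (n' : ℕ) (mu : ℕ → ℕ),
      (∀ i ≤ n', 0 < mu i) →
      (∀ i j, i ≤ j → j ≤ n' → mu i ≤ mu j) →
      (∑ i ∈ Finset.range (n' + 1), mu i = m) →
      (∀ l ≤ m, ∃ I ⊆ Finset.range (n' + 1), ∑ i ∈ I, mu i = l) →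
      n ≤ n') :
    n + 1 = Nat.log 2 m + 1 := by
  set t := Nat.log 2 m with ht_def
  suffices h : n = t by omega
  have h1 : 2 ^ t ≤ m := Nat.pow_log_le_self 2 hm.ne'
  have h2 : m < 2 ^ (t + 1) := Nat.lt_pow_succ_log_self (by norm_num) m
  have h2t : 2 ^ (t + 1) = 2 * 2 ^ t := by ring
  -- Direction 1 : t ≤ n, by counting subset sums
  have hdir1 : t ≤ n := by
    classical
    set f : ℕ → Finset ℕ := fun l => if h : l ≤ m then (hweak l h).choose else ∅ with hf
    have hcard : (Finset.range (m + 1)).card ≤ ((Finset.range (n + 1)).powerset).card := by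
      apply Finset.card_le_card_of_injOn f
      · intro l hl
        have hlm : l ≤ m := by simpa using Nat.lt_succ_iff.1 (Finset.mem_range.1 hl)
        simp only [hf, dif_pos hlm]
        exact Finset.mem_powerset.2 (hweak l hlm).choose_spec.1
      · intro a ha b hb hab
        have ham : a ≤ m := by simpa using Nat.lt_succ_iff.1 (Finset.mem_range.1 ha)
        have hbm : b ≤ m := by simpa using Nat.lt_succ_iff.1 (Finset.mem_range.1 hb)
        have h1 := (hweak a ham).choose_spec.2
        have h2 := (hweak b hbm).choose_spec.2
        simp only [hf, dif_pos ham, dif_pos hbm] at hab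
        rw [← h1, ← h2, hab]
    rw [Finset.card_range, Finset.card_powerset, Finset.card_range] at hcard
    have hlt : m < 2 ^ (n + 1) := by omega
    have := Nat.log_lt_of_lt_pow hm.ne' hlt
    omega
  -- Direction 2 : n ≤ t, by constructing a (t+1)-part M-partition
  have hdir2 : n ≤ t := by
    set r : ℕ := m + 1 - 2 ^ t with hr_def
    have hr1 : 1 ≤ r := by omega
    have hr2 : r ≤ 2 ^ t := by omega
    set s : ℕ := min t (Nat.log 2 r + 1) with hs_def
    have hst : s ≤ t := min_le_left _ _
    set mu : ℕ → ℕ := fun i => if i < s then 2 ^ i else if i = s then r else 2 ^ (i - 1)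
      with hmu
    have hrs2 : r ≤ 2 ^ s := by
      rcases min_cases t (Nat.log 2 r + 1) with ⟨he, hle⟩ | ⟨he, hle⟩
      · rw [hs_def, he]; exact hr2
      · rw [hs_def, he]
        exact le_of_lt (Nat.lt_pow_succ_log_self (by norm_num) r)
    have hrs1 : ∀ i < s, 2 ^ i ≤ r := by
      intro i hi
      have hi2 : i ≤ Nat.log 2 r := by
        have := min_le_right t (Nat.log 2 r + 1)
        omega
      calc 2 ^ i ≤ 2 ^ Nat.log 2 r := Nat.pow_le_pow_right (by norm_num) hi2
        _ ≤ r := Nat.pow_log_le_self 2 (by omega)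
    -- values of mu
    have hmuval1 : ∀ i < s, mu i = 2 ^ i := fun i hi => by simp [hmu, hi]
    have hmuval2 : mu s = r := by simp [hmu]
    have hmuval3 : ∀ i, s < i → mu i = 2 ^ (i - 1) := by
      intro i hi
      simp [hmu, Nat.not_lt.2 hi.le, hi.ne']
    -- positivity
    have hmupos : ∀ i ≤ t, 0 < mu i := by
      intro i _
      rcases lt_trichotomy i s with h | rfl | h
      · rw [hmuval1 i h]; positivity
      · rw [hmuval2]; omega
      · rw [hmuval3 i h]; positivity
    -- monotonicity
    have hmumono : ∀ i j, i ≤ j → j ≤ t → mu i ≤ mu j := by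
      intro i j hij _
      rcases lt_trichotomy i s with hi | rfl | hi
      · rw [hmuval1 i hi]
        rcases lt_trichotomy j s with hj | rfl | hj
        · rw [hmuval1 j hj]; exact Nat.pow_le_pow_right (by norm_num) hij
        · rw [hmuval2]; exact hrs1 i hi
        · rw [hmuval3 j hj]
          exact Nat.pow_le_pow_right (by norm_num) (by omega)
      · rcases eq_or_lt_of_le hij with rfl | hj
        · exact le_refl _
        · rw [hmuval2, hmuval3 j hj]
          calc r ≤ 2 ^ s := hrs2
            _ ≤ 2 ^ (j - 1) := Nat.pow_le_pow_right (by norm_num) (by omega)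
      · have hj : s < j := lt_of_lt_of_le hi hij
        rw [hmuval3 i hi, hmuval3 j hj]
        exact Nat.pow_le_pow_right (by norm_num) (by omega)
    -- sum
    have hmusum : ∑ i ∈ Finset.range (t + 1), mu i = m := by
      have hsplit : ∑ i ∈ Finset.range s, mu i + ∑ i ∈ Finset.Ico s (t + 1), mu i
          = ∑ i ∈ Finset.range (t + 1), mu i := by
        rw [Finset.range_eq_Ico, Finset.range_eq_Ico]
        exact Finset.sum_Ico_consecutive _ (Nat.zero_le s) (by omega)
      have hA : ∑ i ∈ Finset.range s, mu i = 2 ^ s - 1 := by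
        rw [Finset.sum_congr rfl (fun i hi => hmuval1 i (Finset.mem_range.1 hi))]
        exact two_pow_sum_aux s
      have hB : ∑ i ∈ Finset.Ico s (t + 1), mu i
          = r + ∑ i ∈ Finset.Ico (s + 1) (t + 1), mu i := by
        rw [Finset.sum_eq_sum_Ico_succ_bot (by omega : s < t + 1), hmuval2]
      have hC : ∑ i ∈ Finset.Ico (s + 1) (t + 1), mu i = 2 ^ t - 2 ^ s := by
        have e1 : ∑ i ∈ Finset.Ico (s + 1) (t + 1), mu i
            = ∑ i ∈ Finset.Ico s t, 2 ^ i := by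
          rw [Finset.sum_Ico_eq_sum_range, Finset.sum_Ico_eq_sum_range]
          have : t + 1 - (s + 1) = t - s := by omega
          rw [this]
          apply Finset.sum_congr rfl
          intro i hi
          rw [hmuval3 (s + 1 + i) (by omega)]
          congr 1
          omega
        have e2 : ∑ i ∈ Finset.range s, 2 ^ i + ∑ i ∈ Finset.Ico s t, 2 ^ i
            = ∑ i ∈ Finset.range t, 2 ^ i := by
          rw [Finset.range_eq_Ico, Finset.range_eq_Ico]
          exact Finset.sum_Ico_consecutive _ (Nat.zero_le s) hst
        rw [e1]
        rw [two_pow_sum_aux, two_pow_sum_aux] at e2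
        have hss : 2 ^ s ≤ 2 ^ t := Nat.pow_le_pow_right (by norm_num) hst
        have h0s : 0 < 2 ^ s := Nat.pow_pos (by norm_num)
        omega
      have hss : 2 ^ s ≤ 2 ^ t := Nat.pow_le_pow_right (by norm_num) hst
      have h0s : 0 < 2 ^ s := Nat.pow_pos (by norm_num)
      omega
    -- completeness
    have hmuweak : ∀ l ≤ m, ∃ I ⊆ Finset.range (t + 1), ∑ i ∈ I, mu i = l := by
      classical
      set φ : ℕ → ℕ := fun i => if i < s then i else i + 1 with hφ
      have hφinj : Function.Injective φ := by
        intro a b hab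
        simp only [hφ] at hab
        split_ifs at hab <;> omega
      have hφval : ∀ i, mu (φ i) = 2 ^ i := by
        intro i
        by_cases hi : i < s
        · simp only [hφ, if_pos hi]; exact hmuval1 i hi
        · simp only [hφ, if_neg hi]
          rw [hmuval3 (i + 1) (by omega)]
          congr 1
      have hφrange : ∀ i < t, φ i < t + 1 := by
        intro i hi
        simp only [hφ]
        split_ifs <;> omega
      have hφne : ∀ i, φ i ≠ s := by
        intro i
        simp only [hφ]
        split_ifs <;> omega
      have himg : ∀ J ⊆ Finset.range t,
          (J.image φ ⊆ Finset.range (t + 1)) ∧ s ∉ J.image φ ∧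
          ∑ i ∈ J.image φ, mu i = ∑ i ∈ J, 2 ^ i := by
        intro J hJ
        refine ⟨?_, ?_, ?_⟩
        · intro x hx
          obtain ⟨a, ha, rfl⟩ := Finset.mem_image.1 hx
          exact Finset.mem_range.2 (hφrange a (Finset.mem_range.1 (hJ ha)))
        · intro hx
          obtain ⟨a, _, ha⟩ := Finset.mem_image.1 hx
          exact hφne a ha
        · rw [Finset.sum_image (fun a _ b _ h => hφinj h)]
          exact Finset.sum_congr rfl (fun i _ => hφval i)
      intro l hl
      by_cases hcase : l < 2 ^ t
      · obtain ⟨J, hJ, hJs⟩ := bin_rep_aux t l hcase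
        obtain ⟨hi1, _, hi3⟩ := himg J hJ
        exact ⟨J.image φ, hi1, by rw [hi3, hJs]⟩
      · obtain ⟨J, hJ, hJs⟩ := bin_rep_aux t (l - r) (by omega)
        obtain ⟨hi1, hi2, hi3⟩ := himg J hJ
        refine ⟨insert s (J.image φ), ?_, ?_⟩
        · intro x hx
          rcases Finset.mem_insert.1 hx with rfl | hx
          · exact Finset.mem_range.2 (by omega)
          · exact hi1 hx
        · rw [Finset.sum_insert hi2, hmuval2, hi3, hJs]
          omega
    exact hmin t mu hmupos hmumono hmusum hmuweak
  omega
end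

section
/- A partition λ₀ ≤ λ₁ ≤ ⋯ ≤ λₙ of m is a weakM-partition if and only if λᵢ ≤ 1 + λ₀ + ⋯ + λ_{i−1} for every i ≤ n. -/
/-- A partition λ₀ ≤ ⋯ ≤ λₙ of m is a weakM-partition if and only if
λᵢ ≤ 1 + λ₀ + ⋯ + λ_{i−1} for every i ≤ n. -/
theorem weakM_iff_inequalities (m n : ℕ) (lam : ℕ → ℕ)
    (hpos : ∀ i ≤ n, 0 < lam i)
    (hmono : ∀ i j, i ≤ j → j ≤ n → lam i ≤ lam j)
    (hsum : ∑ i ∈ Finset.range (n + 1), lam i = m) :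
    (∀ l ≤ m, ∃ I ⊆ Finset.range (n + 1), ∑ i ∈ I, lam i = l) ↔
    (∀ i ≤ n, lam i ≤ 1 + ∑ j ∈ Finset.range i, lam j) := by
  constructor
  · intro h i hi
    by_contra hlt
    push_neg at hlt
    set S := ∑ j ∈ Finset.range i, lam j with hS
    have hle : S + 1 ≤ m := by
      have hsl : S + lam i ≤ m := by
        rw [← hsum]
        calc S + lam i = ∑ j ∈ Finset.range (i+1), lam j := (Finset.sum_range_succ _ _).symm
        _ ≤ _ := Finset.sum_le_sum_of_subset (Finset.range_subset_range.2 (by omega))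
      omega
    obtain ⟨I, hI, hIsum⟩ := h (S+1) hle
    have hIsub : I ⊆ Finset.range i := by
      intro j hj
      simp only [Finset.mem_range]
      by_contra hji
      push_neg at hji
      have hjn : j ≤ n := by
        have := hI hj; simp only [Finset.mem_range] at this; omega
      have h1 : lam i ≤ lam j := hmono i j hji hjn
      have h2 : lam j ≤ ∑ k ∈ I, lam k := Finset.single_le_sum (fun k _ => Nat.zero_le _) hj
      omega
    have : ∑ k ∈ I, lam k ≤ S := Finset.sum_le_sum_of_subset hIsub
    omega
  · intro h l hl
    have key : ∀ k, k ≤ n + 1 → ∀ l, l ≤ ∑ i ∈ Finset.range k, lam i →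
        ∃ I ⊆ Finset.range k, ∑ i ∈ I, lam i = l := by
      intro k
      induction k with
      | zero => intro _ l hl; simp only [Finset.range_zero, Finset.sum_empty,
          Nat.le_zero] at hl; exact ⟨∅, by simp, by simp [hl]⟩
      | succ k ih =>
        intro hk l hl
        rw [Finset.sum_range_succ] at hl
        by_cases hcase : l ≤ ∑ i ∈ Finset.range k, lam i
        · obtain ⟨I, hI, hs⟩ := ih (by omega) l hcase
          exact ⟨I, hI.trans (Finset.range_subset_range.2 (by omega)), hs⟩
        · push_neg at hcase
          have hlamk : lam k ≤ 1 + ∑ i ∈ Finset.range k, lam i := h k (by omega)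
          have hge : lam k ≤ l := by omega
          obtain ⟨I, hI, hs⟩ := ih (by omega) (l - lam k) (by omega)
          refine ⟨insert k I, ?_, ?_⟩
          · intro j hj
            rcases Finset.mem_insert.1 hj with rfl | hj
            · simp
            · exact Finset.range_subset_range.2 (by omega) (hI hj)
          · have hk_notin : k ∉ I := fun hk' => by
              have := hI hk'; simp only [Finset.mem_range] at this; omega
            rw [Finset.sum_insert hk_notin, hs]; omega
    rw [← hsum] at hl
    exact key (n+1) le_rfl l hl
end

section
/- A partition λ₀ ≤ λ₁ ≤ ⋯ ≤ λₙ of m is an M-partition if and only if λᵢ ≤ 1 + λ₀ + ⋯ + λ_{i−1} for every i ≤ n and 2^n ≤ λ₀ + λ₁ + ⋯ + λₙ. -/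
/-- Completeness follows from the inequalities. -/
lemma complete_of_ineq (lam : ℕ → ℕ) :
    ∀ n, (∀ i < n, lam i ≤ 1 + ∑ j ∈ Finset.range i, lam j) →
    ∀ l ≤ ∑ i ∈ Finset.range n, lam i,
      ∃ I ⊆ Finset.range n, ∑ i ∈ I, lam i = l := by
  intro n
  induction n with
  | zero =>
    intro _ l hl
    simp only [Finset.range_zero, Finset.sum_empty, Nat.le_zero] at hl
    exact ⟨∅, by simp, by simp [hl]⟩
  | succ n ih =>
    intro h l hl
    rcases le_or_gt l (∑ i ∈ Finset.range n, lam i) with h1 | h1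
    · obtain ⟨I, hI, hs⟩ := ih (fun i hi => h i (by omega)) l h1
      exact ⟨I, hI.trans (Finset.range_subset_range.2 (by omega)), hs⟩
    · have hln : lam n ≤ l := by
        have := h n (by omega); omega
      rw [Finset.sum_range_succ] at hl
      obtain ⟨I, hI, hs⟩ := ih (fun i hi => h i (by omega)) (l - lam n) (by omega)
      have hnI : n ∉ I := fun hn => by
        have := Finset.mem_range.1 (hI hn); omega
      refine ⟨insert n I, ?_, ?_⟩
      · intro x hx
        rcases Finset.mem_insert.1 hx with rfl | hx
        · exact Finset.self_mem_range_succ x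
        · exact Finset.range_subset_range.2 (Nat.le_succ n) (hI hx)
      · rw [Finset.sum_insert hnI]
        omega

/-- Counting bound: a complete partition with `t` parts forces `m + 1 ≤ 2 ^ t`. -/
lemma card_bound (mu : ℕ → ℕ) (t m : ℕ)
    (h : ∀ l ≤ m, ∃ I ⊆ Finset.range t, ∑ i ∈ I, mu i = l) :
    m + 1 ≤ 2 ^ t := by
  have hsurj : Set.SurjOn (fun I : Finset ℕ => ∑ i ∈ I, mu i)
      ((Finset.range t).powerset : Finset (Finset ℕ)) (Finset.Iic m : Finset ℕ) := by
    intro l hl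
    simp only [Finset.coe_Iic, Set.mem_Iic] at hl
    obtain ⟨I, hI, hs⟩ := h l hl
    exact ⟨I, Finset.mem_coe.2 (Finset.mem_powerset.2 hI), hs⟩
  have := Finset.card_le_card_of_surjOn _ hsurj
  simpa using this

/-- Completeness implies the inequalities. -/
lemma ineq_of_complete (lam : ℕ → ℕ) (n m : ℕ)
    (hmono : ∀ i j, i ≤ j → j ≤ n → lam i ≤ lam j)
    (hsum : ∑ i ∈ Finset.range (n+1), lam i = m)
    (hc : ∀ l ≤ m, ∃ I ⊆ Finset.range (n+1), ∑ i ∈ I, lam i = l) :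
    ∀ i ≤ n, lam i ≤ 1 + ∑ j ∈ Finset.range i, lam j := by
  intro i hi
  by_contra hlt
  push_neg at hlt
  set l := 1 + ∑ j ∈ Finset.range i, lam j with hldef
  have hlm : l ≤ m := by
    have h2 : ∑ j ∈ Finset.range i, lam j + lam i ≤ m := by
      rw [← hsum, ← Finset.sum_range_succ]
      exact Finset.sum_le_sum_of_subset (Finset.range_subset_range.2 (by omega))
    omega
  obtain ⟨I, hI, hs⟩ := hc l hlm
  have hIi : I ⊆ Finset.range i := by
    intro x hx
    simp only [Finset.mem_range]
    by_contra hxi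
    push_neg at hxi
    have hxn : x ≤ n := by have := Finset.mem_range.1 (hI hx); omega
    have h1 : lam i ≤ lam x := hmono i x hxi hxn
    have h2 : lam x ≤ l := hs ▸ Finset.single_le_sum (fun _ _ => Nat.zero_le _) hx
    omega
  have := Finset.sum_le_sum_of_subset (f := lam) hIi
  omega

/-- Existence of a complete partition of `m` with `t` parts whenever
`1 ≤ t ≤ m ≤ 2 ^ t - 1`. -/
lemma exists_complete : ∀ t : ℕ, ∀ m : ℕ, 1 ≤ t → t ≤ m → m + 1 ≤ 2 ^ t →
    ∃ mu : ℕ → ℕ, (∀ i < t, 0 < mu i) ∧ (∀ i j, i ≤ j → j < t → mu i ≤ mu j) ∧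
      (∑ i ∈ Finset.range t, mu i = m) ∧
      (∀ i < t, mu i ≤ 1 + ∑ j ∈ Finset.range i, mu j) := by
  intro t
  induction t with
  | zero => intro m h; omega
  | succ t ih =>
    intro m _ hm ht2
    rcases Nat.eq_zero_or_pos t with rfl | htpos
    · have : m = 1 := by norm_num at ht2; omega
      subst this
      exact ⟨fun _ => 1, by intro i _; norm_num, by intro i j _ _; rfl, by simp, by
        intro i hi; interval_cases i <;> simp⟩
    · -- t ≥ 1
      set m' := max (m / 2) t with hm'def
      set a := m - m' with hadef
      have hmaxc : m' = m / 2 ∨ m' = t := max_choice _ _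
      have haeq : a = m - m' := hadef
      have hmax1 : m / 2 ≤ m' := le_max_left _ _
      have hmax2 : t ≤ m' := le_max_right _ _
      clear_value m' a
      have hp : 2 ^ (t + 1) = 2 * 2 ^ t := by ring
      have htp : t + 1 ≤ 2 ^ t := Nat.lt_two_pow_self (n := t)
      have hm'le : m' + 1 ≤ 2 ^ t := by omega
      obtain ⟨mu', hpos', hmono', hsum', hineq'⟩ := ih m' htpos hmax2 hm'le
      -- top part bound
      have htsplit : ∑ i ∈ Finset.range t, mu' i
          = ∑ i ∈ Finset.range (t - 1), mu' i + mu' (t - 1) := by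
        have ht1 : t - 1 + 1 = t := by omega
        rw [← Finset.sum_range_succ, ht1]
      have hcard : t - 1 ≤ ∑ i ∈ Finset.range (t - 1), mu' i := by
        calc t - 1 = ∑ _i ∈ Finset.range (t - 1), 1 := by simp
        _ ≤ _ := Finset.sum_le_sum (fun i hi => hpos' i (by
            have := Finset.mem_range.1 hi; omega))
      have htop2 : 2 * mu' (t - 1) ≤ m' + 1 := by
        have := hineq' (t - 1) (by omega)
        omega
      have htopa : mu' (t - 1) ≤ a := by
        have h1 : mu' (t - 1) + (t - 1) ≤ m' := by omega
        omega
      refine ⟨fun i => if i < t then mu' i else a, ?_, ?_, ?_, ?_⟩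
      · intro i hi
        by_cases h : i < t
        · simpa [h] using hpos' i h
        · simp only [h, if_false]; omega
      · intro i j hij hj
        by_cases hjt : j < t
        · have hit : i < t := lt_of_le_of_lt hij hjt
          simpa [hit, hjt] using hmono' i j hij hjt
        · have hjt' : j = t := by omega
          by_cases hit : i < t
          · simp only [hit, if_true, hjt', lt_self_iff_false, if_false]
            exact le_trans (hmono' i (t - 1) (by omega) (by omega)) htopa
          · simp [hit, hjt']
      · rw [Finset.sum_range_succ]
        simp only [lt_irrefl, if_false]
        have : ∑ i ∈ Finset.range t, (if i < t then mu' i else a) = m' := by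
          rw [← hsum']
          exact Finset.sum_congr rfl (fun i hi => by
            simp [Finset.mem_range.1 hi])
        omega
      · intro i hi
        have hsr : ∀ k ≤ t, ∑ j ∈ Finset.range k, (if j < t then mu' j else a)
            = ∑ j ∈ Finset.range k, mu' j := by
          intro k hk
          exact Finset.sum_congr rfl (fun j hj => by
            have := Finset.mem_range.1 hj; simp [show j < t by omega])
        by_cases h : i < t
        · rw [hsr i (by omega)]
          simpa [h] using hineq' i h
        · have hit : i = t := by omega
          rw [hit, hsr t le_rfl, hsum']
          simp only [lt_irrefl, if_false]
          omega

/-- A partition λ₀ ≤ ⋯ ≤ λₙ of m is an M-partition (weakM with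
minimal number of parts) iff λᵢ ≤ 1 + λ₀ + ⋯ + λ_{i−1} for every i ≤ n and
2^n ≤ λ₀ + ⋯ + λₙ. -/
theorem M_partition_iff_inequalities (m n : ℕ) (hm : 0 < m) (lam : ℕ → ℕ)
    (hpos : ∀ i ≤ n, 0 < lam i)
    (hmono : ∀ i j, i ≤ j → j ≤ n → lam i ≤ lam j)
    (hsum : ∑ i ∈ Finset.range (n + 1), lam i = m) :
    ((∀ l ≤ m, ∃ I ⊆ Finset.range (n + 1), ∑ i ∈ I, lam i = l) ∧
      (∀ (n' : ℕ) (mu : ℕ → ℕ),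
        (∀ i ≤ n', 0 < mu i) →
        (∀ i j, i ≤ j → j ≤ n' → mu i ≤ mu j) →
        (∑ i ∈ Finset.range (n' + 1), mu i = m) →
        (∀ l ≤ m, ∃ I ⊆ Finset.range (n' + 1), ∑ i ∈ I, mu i = l) →
        n ≤ n')) ↔
    ((∀ i ≤ n, lam i ≤ 1 + ∑ j ∈ Finset.range i, lam j) ∧
      2 ^ n ≤ ∑ i ∈ Finset.range (n + 1), lam i) := by
  have hnm : n + 1 ≤ m := by
    calc n + 1 = ∑ _i ∈ Finset.range (n + 1), 1 := by simp
    _ ≤ ∑ i ∈ Finset.range (n + 1), lam i :=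
        Finset.sum_le_sum (fun i hi => hpos i (by
          have := Finset.mem_range.1 hi; omega))
    _ = m := hsum
  constructor
  · rintro ⟨hc, hmin⟩
    refine ⟨ineq_of_complete lam n m hmono hsum hc, ?_⟩
    rw [hsum]
    by_contra hlt
    push_neg at hlt
    have hn1 : 1 ≤ n := by
      rcases Nat.eq_zero_or_pos n with rfl | h
      · simp at hlt; omega
      · exact h
    obtain ⟨mu, hpos', hmono', hsum', hineq'⟩ :=
      exists_complete n m hn1 (by omega) (by omega)
    have hc' : ∀ l ≤ m, ∃ I ⊆ Finset.range n, ∑ i ∈ I, mu i = l := by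
      intro l hl
      exact complete_of_ineq mu n hineq' l (by omega)
    have := hmin (n - 1) mu
      (fun i hi => hpos' i (by omega))
      (fun i j hij hj => hmono' i j hij (by omega))
      (by rw [show n - 1 + 1 = n by omega]; exact hsum')
      (by rw [show n - 1 + 1 = n by omega]; exact hc')
    omega
  · rintro ⟨hineq, h2⟩
    rw [hsum] at h2
    have hc : ∀ l ≤ m, ∃ I ⊆ Finset.range (n + 1), ∑ i ∈ I, lam i = l := by
      intro l hl
      exact complete_of_ineq lam (n + 1) (fun i hi => hineq i (by omega)) l (by omega)
    refine ⟨hc, ?_⟩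
    intro n' mu _ _ _ hc'
    have := card_bound mu (n' + 1) m hc'
    have h2' : 2 ^ n < 2 ^ (n' + 1) := by omega
    have := (Nat.pow_lt_pow_iff_right (by norm_num : 1 < 2)).1 h2'
    omega
end

section
/- Let m = λ₀ + ⋯ + λₙ be an M-partition and r a positive integer. Then λ₀ + λ₁ + ⋯ + λₙ + r is an M-partition of m + r if and only if λₙ ≤ r, r ≤ m + 1, and 2^{n+1} ≤ m + r. -/
/-- Extending an M-partition of m by a new largest part r gives an
M-partition of m + r iff λₙ ≤ r, r ≤ m + 1 and 2^{n+1} ≤ m + r. -/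
theorem M_partition_extension (m n r : ℕ) (hr : 0 < r) (lam : ℕ → ℕ)
    (hpos : ∀ i ≤ n, 0 < lam i)
    (hmono : ∀ i j, i ≤ j → j ≤ n → lam i ≤ lam j)
    (hsum : ∑ i ∈ Finset.range (n + 1), lam i = m)
    (hineq : ∀ i ≤ n, lam i ≤ 1 + ∑ j ∈ Finset.range i, lam j)
    (hbig : 2 ^ n ≤ m)
    (mu : ℕ → ℕ) (hmu : mu = fun i => if i = n + 1 then r else lam i) :
    ((∀ i j, i ≤ j → j ≤ n + 1 → mu i ≤ mu j) ∧
      (∀ i ≤ n + 1, mu i ≤ 1 + ∑ j ∈ Finset.range i, mu j) ∧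
      2 ^ (n + 1) ≤ m + r) ↔
    (lam n ≤ r ∧ r ≤ m + 1 ∧ 2 ^ (n + 1) ≤ m + r) := by
  subst hmu
  have hsum2 : ∀ k ≤ n + 1, ∑ j ∈ Finset.range k,
      (fun i => if i = n + 1 then r else lam i) j = ∑ j ∈ Finset.range k, lam j := by
    intro k hk
    apply Finset.sum_congr rfl
    intro j hj
    simp only [Finset.mem_range] at hj
    have : j ≠ n + 1 := by omega
    simp [this]
  constructor
  · rintro ⟨h1, h2, h3⟩
    refine ⟨?_, ?_, h3⟩
    · have := h1 n (n + 1) (by omega) le_rfl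
      simpa using this
    · have := h2 (n + 1) le_rfl
      rw [hsum2 (n + 1) le_rfl, hsum] at this
      simp at this
      omega
  · rintro ⟨h1, h2, h3⟩
    refine ⟨?_, ?_, h3⟩
    · intro i j hij hj
      by_cases hjn : j = n + 1
      · subst hjn
        by_cases hin : i = n + 1
        · simp [hin]
        · simp only [if_pos rfl, if_neg hin]
          exact le_trans (hmono i n (by omega) le_rfl) h1
      · have hin : i ≠ n + 1 := by omega
        simp only [if_neg hin, if_neg hjn]
        exact hmono i j hij (by omega)
    · intro i hi
      rw [hsum2 i hi]
      by_cases hin : i = n + 1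
      · subst hin
        simp only [if_pos rfl, eq_self_iff_true, if_true]
        rw [hsum]
        omega
      · simp only [if_neg hin]
        exact hineq i (by omega)
end

section
/- Let m be a positive integer with n = ⌊log₂ m⌋. Define λₙ = ⌈m/2⌉ and recursively λᵢ = ⌈(m − (λₙ + λ_{n−1} + ⋯ + λ_{i+1}))/2⌉ for 0 ≤ i < n. Then λ₀ + λ₁ + ⋯ + λₙ = m, the λᵢ are nondecreasing, and this partition is an M-partition of m. -/
/-- With λₙ = ⌈m/2⌉ and λᵢ = ⌈(m − (λₙ + ⋯ + λ_{i+1}))/2⌉ for i < n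
(where n = ⌊log₂ m⌋), we get an M-partition of m. -/
theorem algorithm2_M_partition (m n : ℕ) (hm : 0 < m) (hn : n = Nat.log 2 m)
    (lam : ℕ → ℕ)
    (htop : lam n = (m + 1) / 2)
    (hrec : ∀ i < n, lam i = (m - (∑ j ∈ Finset.Icc (i + 1) n, lam j) + 1) / 2) :
    (∑ i ∈ Finset.range (n + 1), lam i = m) ∧
    (∀ i ≤ n, 0 < lam i) ∧
    (∀ i j, i ≤ j → j ≤ n → lam i ≤ lam j) ∧
    (∀ i ≤ n, lam i ≤ 1 + ∑ j ∈ Finset.range i, lam j) ∧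
    2 ^ n ≤ m := by
  have hpow : 2 ^ n ≤ m := by
    rw [hn]; exact Nat.pow_log_le_self 2 hm.ne'
  have hpow2 : m < 2 ^ (n + 1) := by
    rw [hn]; exact Nat.lt_pow_succ_log_self (by norm_num) m
  -- key invariant
  have key : ∀ k ≤ n, (∑ j ∈ Finset.Icc (n - k + 1) n, lam j) + m / 2 ^ k = m := by
    intro k
    induction k with
    | zero =>
      intro _
      simp
    | succ k ih =>
      intro hk1
      have hk : k ≤ n := by omega
      have IH := ih hk
      -- lam (n - k) = (m / 2^k + 1) / 2
      have hl : lam (n - k) = (m / 2 ^ k + 1) / 2 := by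
        rcases Nat.eq_zero_or_pos k with rfl | hkpos
        · simpa using htop
        · have hlt : n - k < n := by omega
          rw [hrec (n - k) hlt]
          have hsub : m - (∑ j ∈ Finset.Icc (n - k + 1) n, lam j) = m / 2 ^ k := by
            generalize m / 2 ^ k = q at IH ⊢
            omega
          rw [hsub]
      have hins : Finset.Icc (n - (k + 1) + 1) n = insert (n - k) (Finset.Icc (n - k + 1) n) := by
        have h1 : n - (k + 1) + 1 = n - k := by omega
        rw [h1]
        ext x
        simp only [Finset.mem_Icc, Finset.mem_insert]
        omega
      rw [hins, Finset.sum_insert (by simp)]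
      have hdiv : m / 2 ^ (k + 1) = (m / 2 ^ k) / 2 := by
        rw [pow_succ, Nat.div_div_eq_div_mul]
      rw [hl, hdiv]
      generalize m / 2 ^ k = q at IH ⊢
      omega
  have hq1 : ∀ i ≤ n, 1 ≤ m / 2 ^ (n - i) := by
    intro i hi
    rw [Nat.le_div_iff_mul_le (Nat.pow_pos (by norm_num))]
    calc 1 * 2 ^ (n - i) = 2 ^ (n - i) := by ring
    _ ≤ 2 ^ n := Nat.pow_le_pow_right (by norm_num) (by omega)
    _ ≤ m := hpow
  have hlam : ∀ i ≤ n, lam i = (m / 2 ^ (n - i) + 1) / 2 := by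
    intro i hi
    rcases Nat.eq_or_lt_of_le hi with rfl | hlt
    · simpa using htop
    · have hk := key (n - i) (by omega)
      have h1 : n - (n - i) + 1 = i + 1 := by omega
      rw [h1] at hk
      have hsub : m - (∑ j ∈ Finset.Icc (i + 1) n, lam j) = m / 2 ^ (n - i) := by
        generalize m / 2 ^ (n - i) = q at hk ⊢
        omega
      rw [hrec i hlt, hsub]
  -- value of m / 2^n
  have hqn : m / 2 ^ n = 1 := by
    apply Nat.div_eq_of_lt_le
    · simpa using hpow
    · have : 2 * 2 ^ n = 2 ^ (n + 1) := by ring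
      omega
  -- sum over Icc i n
  have hIcc : ∀ i ≤ n, (∑ j ∈ Finset.Icc i n, lam j)
      = lam i + ∑ j ∈ Finset.Icc (i + 1) n, lam j := by
    intro i hi
    have : Finset.Icc i n = insert i (Finset.Icc (i + 1) n) := by
      ext x
      simp only [Finset.mem_Icc, Finset.mem_insert]
      omega
    rw [this, Finset.sum_insert (by simp)]
  have hrange : ∀ i ≤ n, (∑ j ∈ Finset.range i, lam j) + (∑ j ∈ Finset.Icc i n, lam j)
      = ∑ j ∈ Finset.range (n + 1), lam j := by
    intro i hi
    rw [Finset.range_eq_Ico, ← Finset.Ico_add_one_right_eq_Icc, Finset.range_eq_Ico]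
    exact Finset.sum_Ico_consecutive lam (Nat.zero_le i) (by omega)
  have htotal : ∑ i ∈ Finset.range (n + 1), lam i = m := by
    have h0 := hrange 0 (Nat.zero_le n)
    have hI := hIcc 0 (Nat.zero_le n)
    have hk := key n le_rfl
    have h1 : n - n + 1 = 0 + 1 := by omega
    rw [h1] at hk
    have hl0 : lam 0 = 1 := by
      rw [hlam 0 (Nat.zero_le n)]
      simp [hqn]
    simp only [Finset.range_zero, Finset.sum_empty, zero_add] at h0
    rw [← h0, hI, hl0, hqn] at *
    omega
  refine ⟨htotal, ?_, ?_, ?_, hpow⟩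
  · intro i hi
    rw [hlam i hi]
    have := hq1 i hi
    generalize m / 2 ^ (n - i) = q at *
    omega
  · intro i j hij hj
    rw [hlam i (le_trans hij hj), hlam j hj]
    have hle : m / 2 ^ (n - i) ≤ m / 2 ^ (n - j) := by
      apply Nat.div_le_div_left
      · exact Nat.pow_le_pow_right (by norm_num) (by omega)
      · exact Nat.pow_pos (by norm_num)
    generalize m / 2 ^ (n - i) = q at *
    generalize m / 2 ^ (n - j) = q' at *
    omega
  · intro i hi
    have hr := hrange i hi
    have hI := hIcc i hi
    have hk := key (n - i) (by omega)
    have h1 : n - (n - i) + 1 = i + 1 := by omega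
    rw [h1] at hk
    rw [htotal] at hr
    rw [hlam i hi] at hI ⊢
    generalize m / 2 ^ (n - i) = q at *
    omega
end

section
/- If m = λ₀ + λ₁ + ⋯ + λₙ is an M-partition and 1 ≤ i ≤ n, then λₙ ≥ ⌈(m − 2^{n−i+1} + 1)/i⌉. -/
/-- If m = λ₀ + ⋯ + λₙ is an M-partition and 1 ≤ i ≤ n, then
λₙ ≥ ⌈(m − 2^{n−i+1} + 1)/i⌉. -/
theorem largest_part_lower_bound (m n : ℕ) (lam : ℕ → ℕ)
    (hpos : ∀ i ≤ n, 0 < lam i)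
    (hmono : ∀ i j, i ≤ j → j ≤ n → lam i ≤ lam j)
    (hsum : ∑ i ∈ Finset.range (n + 1), lam i = m)
    (hineq : ∀ j ≤ n, lam j ≤ 1 + ∑ k ∈ Finset.range j, lam k)
    (hbig : 2 ^ n ≤ m) :
    ∀ i, 1 ≤ i → i ≤ n → (m - 2 ^ (n - i + 1) + 1 + (i - 1)) / i ≤ lam n := by
  -- partial sums are at most 2^j - 1
  have hS : ∀ j, j ≤ n + 1 → (∑ k ∈ Finset.range j, lam k) + 1 ≤ 2 ^ j := by
    intro j
    induction j with
    | zero => simp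
    | succ j ih =>
      intro hj
      have hjn : j ≤ n := Nat.lt_succ_iff.mp hj
      have h1 := hineq j hjn
      have h2 := ih (le_of_lt hj)
      rw [Finset.sum_range_succ]
      calc (∑ k ∈ Finset.range j, lam k) + lam j + 1
          ≤ (∑ k ∈ Finset.range j, lam k) + (1 + ∑ k ∈ Finset.range j, lam k) + 1 := by omega
        _ = 2 * ((∑ k ∈ Finset.range j, lam k) + 1) := by ring
        _ ≤ 2 * 2 ^ j := by omega
        _ = 2 ^ (j + 1) := by ring
  intro i hi1 hin
  have hsplit : (∑ k ∈ Finset.range (n - i + 1), lam k) +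
      ∑ k ∈ Finset.Ico (n - i + 1) (n + 1), lam k = ∑ k ∈ Finset.range (n + 1), lam k := by
    rw [Finset.range_eq_Ico, Finset.range_eq_Ico]
    exact Finset.sum_Ico_consecutive lam (n := n - i + 1) (k := n + 1) (Nat.zero_le _) (by omega)
  have htail : ∑ k ∈ Finset.Ico (n - i + 1) (n + 1), lam k ≤ i * lam n := by
    calc ∑ k ∈ Finset.Ico (n - i + 1) (n + 1), lam k
        ≤ ∑ k ∈ Finset.Ico (n - i + 1) (n + 1), lam n := by
          apply Finset.sum_le_sum
          intro k hk
          simp only [Finset.mem_Ico] at hk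
          exact hmono k n (by omega) le_rfl
      _ = i * lam n := by
          rw [Finset.sum_const, Nat.card_Ico, smul_eq_mul]
          congr 1
          omega
  have hfront := hS (n - i + 1) (by omega)
  have hi0 : 0 < i := hi1
  have hpow : 2 ^ (n - i + 1) = 2 * 2 ^ (n - i) := by ring
  have hln : 0 < i * lam n := Nat.mul_pos hi0 (hpos n le_rfl)
  have hkey : m - 2 ^ (n - i + 1) + 1 ≤ i * lam n := by omega
  rw [Nat.div_le_iff_le_mul_add_pred hi0]
  calc m - 2 ^ (n - i + 1) + 1 + (i - 1) ≤ i * lam n + (i - 1) := by omega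
end

section
/- If m = λ₀ + λ₁ + ⋯ + λₙ is an M-partition, then max{m − 2^n + 1, ⌈(m − 2^{n−1} + 1)/2⌉} ≤ λₙ ≤ ⌈m/2⌉. -/
/-- If m = λ₀ + ⋯ + λₙ is an M-partition, then
max{m − 2^n + 1, ⌈(m − 2^{n−1} + 1)/2⌉} ≤ λₙ ≤ ⌈m/2⌉. -/
theorem largest_part_bounds (m n : ℕ) (lam : ℕ → ℕ)
    (hpos : ∀ i ≤ n, 0 < lam i)
    (hmono : ∀ i j, i ≤ j → j ≤ n → lam i ≤ lam j)
    (hsum : ∑ i ∈ Finset.range (n + 1), lam i = m)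
    (hineq : ∀ i ≤ n, lam i ≤ 1 + ∑ j ∈ Finset.range i, lam j)
    (hbig : 2 ^ n ≤ m) :
    max (m - 2 ^ n + 1) ((m - 2 ^ (n - 1) + 1 + 1) / 2) ≤ lam n ∧
    lam n ≤ (m + 1) / 2 := by
  have hP : ∀ i, i ≤ n → ∑ j ∈ Finset.range i, lam j ≤ 2 ^ i - 1 := by
    intro i
    induction i with
    | zero => simp
    | succ k ih =>
      intro hk
      have hk' : k ≤ n := Nat.le_of_succ_le hk
      have h1 := ih hk'
      have h2 := hineq k hk'
      rw [Finset.sum_range_succ]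
      have : ∑ j ∈ Finset.range k, lam j + lam k ≤ (2 ^ k - 1) + (1 + (2 ^ k - 1)) := by
        omega
      have hpk : 1 ≤ 2 ^ k := Nat.one_le_two_pow
      calc ∑ j ∈ Finset.range k, lam j + lam k ≤ (2 ^ k - 1) + (1 + (2 ^ k - 1)) := this
        _ ≤ 2 ^ (k + 1) - 1 := by rw [pow_succ]; omega
  have hsum' : ∑ j ∈ Finset.range n, lam j + lam n = m := by
    rw [← Finset.sum_range_succ]; exact hsum
  have hPn := hP n le_rfl
  have hup : 2 * lam n ≤ m + 1 := by
    have := hineq n le_rfl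
    omega
  constructor
  · rw [max_le_iff]
    constructor
    · obtain ⟨K, hK⟩ : ∃ K, 2 ^ n = K := ⟨_, rfl⟩
      rw [hK] at hPn hbig ⊢
      have h1K : 1 ≤ K := hK ▸ Nat.one_le_two_pow
      omega
    · -- need m - 2^(n-1) + 1 ≤ 2 * lam n
      have key : m + 1 ≤ 2 * lam n + 2 ^ (n - 1) := by
        cases n with
        | zero => simp at hsum'; omega
        | succ k =>
          have hsum'' : ∑ j ∈ Finset.range k, lam j + lam k + lam (k+1) = m := by
            rw [← Finset.sum_range_succ]; exact hsum'
          have hPk := hP k (Nat.le_succ k)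
          have hm := hmono k (k+1) (Nat.le_succ k) le_rfl
          have hpk : 1 ≤ 2 ^ k := Nat.one_le_two_pow
          simp only [Nat.succ_sub_one]
          obtain ⟨p, hp1, hp2⟩ : ∃ p, ∑ j ∈ Finset.range k, lam j ≤ p - 1 ∧ 1 ≤ p :=
            ⟨2 ^ k, hPk, Nat.one_le_two_pow⟩
          omega
      have hpn : 1 ≤ 2 ^ (n - 1) := Nat.one_le_two_pow
      obtain ⟨Q, hQ⟩ : ∃ Q, 2 ^ (n - 1) = Q := ⟨_, rfl⟩
      rw [hQ] at key hpn ⊢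
      have := hpos n le_rfl
      omega
  · omega
end

section
/- If m = λ₀ + λ₁ + ⋯ + λₙ is an M-partition, then ⌊m/2⌋ ≤ λ₀ + λ₁ + ⋯ + λ_{n−1} ≤ min{⌊(m + 2^{n−1} − 1)/2⌋, 2^n − 1}. -/
/-- If m = λ₀ + ⋯ + λₙ is an M-partition, then
⌊m/2⌋ ≤ λ₀ + ⋯ + λ_{n−1} ≤ min{⌊(m + 2^{n−1} − 1)/2⌋, 2^n − 1}. -/
theorem partial_sum_bounds (m n : ℕ) (lam : ℕ → ℕ)
    (hpos : ∀ i ≤ n, 0 < lam i)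
    (hmono : ∀ i j, i ≤ j → j ≤ n → lam i ≤ lam j)
    (hsum : ∑ i ∈ Finset.range (n + 1), lam i = m)
    (hineq : ∀ i ≤ n, lam i ≤ 1 + ∑ j ∈ Finset.range i, lam j)
    (hbig : 2 ^ n ≤ m) :
    m / 2 ≤ ∑ i ∈ Finset.range n, lam i ∧
    ∑ i ∈ Finset.range n, lam i ≤ min ((m + 2 ^ (n - 1) - 1) / 2) (2 ^ n - 1) := by
  have aux : ∀ k, k ≤ n → ∑ i ∈ Finset.range k, lam i + 1 ≤ 2 ^ k := by
    intro k
    induction k with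
    | zero => simp
    | succ k ih =>
      intro hk
      have h1 := ih (Nat.le_of_succ_le hk)
      have h2 := hineq k (Nat.le_of_succ_le hk)
      rw [Finset.sum_range_succ]
      calc ∑ i ∈ Finset.range k, lam i + lam k + 1
          ≤ ∑ i ∈ Finset.range k, lam i + (1 + ∑ j ∈ Finset.range k, lam j) + 1 := by
            omega
        _ = 2 * (∑ i ∈ Finset.range k, lam i + 1) := by ring
        _ ≤ 2 * 2 ^ k := by omega
        _ = 2 ^ (k + 1) := by ring
  set S := ∑ i ∈ Finset.range n, lam i with hS
  have hm : S + lam n = m := by rw [hS, ← Finset.sum_range_succ]; exact hsum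
  have hln := hineq n le_rfl
  have hSn := aux n le_rfl
  constructor
  · omega
  · refine le_min ?_ (by omega)
    rw [Nat.le_div_iff_mul_le (by norm_num)]
    -- need S * 2 ≤ m + 2^(n-1) - 1
    rcases Nat.eq_zero_or_pos n with hn | hn
    · subst hn; simp [hS]
    · have h1 : ∑ i ∈ Finset.range (n - 1), lam i + 1 ≤ 2 ^ (n - 1) :=
        aux (n - 1) (Nat.sub_le _ _)
      have h2 : S = ∑ i ∈ Finset.range (n - 1), lam i + lam (n - 1) := by
        rw [hS]
        conv_lhs => rw [show n = (n - 1) + 1 by omega, Finset.sum_range_succ]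
      have h3 : lam (n - 1) ≤ lam n := hmono (n - 1) n (Nat.sub_le _ _) le_rfl
      have hp : (1 : ℕ) ≤ 2 ^ (n - 1) := Nat.one_le_two_pow
      omega
end

section
/- Let m be a positive integer with 2^n + 2^{n−1} − 1 ≤ m < 2^{n+1}, and let a_k = |Mp(k)| denote the number of M-partitions of k. Then a_m = ∑_{j=⌊m/2⌋}^{2^n − 1} a_j. -/
/-- `l` is (the sorted list of parts of) an M-partition of `k`: nondecreasing
positive parts λ₀ ≤ ⋯ ≤ λ_s summing to `k`, with λᵢ ≤ 1 + λ₀ + ⋯ + λ_{i−1}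
for all i and 2^s ≤ k (where s + 1 is the number of parts). -/
def IsMPartition (k : ℕ) (l : List ℕ) : Prop :=
  l ≠ [] ∧ l.Pairwise (· ≤ ·) ∧ (∀ x ∈ l, 0 < x) ∧ l.sum = k ∧
  (∀ i, (h : i < l.length) → l.get ⟨i, h⟩ ≤ 1 + (l.take i).sum) ∧
  2 ^ (l.length - 1) ≤ k

/-- `a k` is the number of M-partitions of `k` (sorted lists of parts are in
bijection with multisets of parts). -/
noncomputable def numMPartitions (k : ℕ) : ℕ :=
  Nat.card {l : List ℕ // IsMPartition k l}

-- (1) take sums bound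
lemma MP.take_sum_le {l : List ℕ}
    (hc : ∀ i, (h : i < l.length) → l.get ⟨i, h⟩ ≤ 1 + (l.take i).sum) :
    ∀ i, (l.take i).sum ≤ 2 ^ i - 1 := by
  intro i
  induction i with
  | zero => simp
  | succ i ih =>
    have h2 : (1:ℕ) ≤ 2 ^ i := Nat.one_le_two_pow
    have h3 : 2 ^ (i+1) = 2 * 2 ^ i := by ring
    by_cases h : i < l.length
    · rw [List.sum_take_succ l i h]
      have := hc i h
      simp only [List.get_eq_getElem] at this
      omega
    · rw [List.take_of_length_le (show l.length ≤ i + 1 by omega)]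
      rw [List.take_of_length_le (show l.length ≤ i by omega)] at ih
      omega

-- (2) sum < 2 ^ length
lemma MP.sum_lt {k : ℕ} {l : List ℕ} (h : IsMPartition k l) : k < 2 ^ l.length := by
  obtain ⟨-, -, -, hsum, hc, -⟩ := h
  have := MP.take_sum_le hc l.length
  rw [List.take_length] at this
  have : (1:ℕ) ≤ 2 ^ l.length := Nat.one_le_two_pow
  omega

-- (3) length determination
lemma MP.length_eq {k t : ℕ} {l : List ℕ} (h : IsMPartition k l)
    (h1 : 2 ^ t ≤ k) (h2 : k < 2 ^ (t+1)) : l.length = t + 1 := by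
  have hlt := MP.sum_lt h
  obtain ⟨hne, -, -, -, hc, hpow⟩ := h
  have hlen : 1 ≤ l.length := List.length_pos_iff.2 hne
  have a1 : t < l.length := by
    by_contra hcon
    exact absurd (lt_of_le_of_lt h1 hlt) (not_lt.2 (Nat.pow_le_pow_right (by norm_num) (by omega)))
  have a2 : l.length - 1 < t + 1 := by
    by_contra hcon
    exact absurd (lt_of_le_of_lt hpow h2) (not_lt.2 (Nat.pow_le_pow_right (by norm_num) (by omega)))
  omega

-- (4) every part x satisfies 2x ≤ 1 + k
lemma MP.two_mul_le {k : ℕ} {l : List ℕ} (h : IsMPartition k l) {x : ℕ} (hx : x ∈ l) :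
    2 * x ≤ 1 + k := by
  obtain ⟨-, -, -, hsum, hc, -⟩ := h
  obtain ⟨⟨i, hi⟩, rfl⟩ := List.mem_iff_get.1 hx
  have h1 := hc i hi
  have h2 : (l.take (i + 1)).sum + (l.drop (i + 1)).sum = l.sum := by
    rw [← List.sum_append, List.take_append_drop]
  rw [List.sum_take_succ l i hi] at h2
  simp only [List.get_eq_getElem] at *
  omega


-- (5) dropLast of an M-partition is an M-partition of its sum (given length ≥ 2 and pow cond)
lemma MP.dropLast {k : ℕ} {l : List ℕ} (h : IsMPartition k l) (hlen : 2 ≤ l.length)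
    (hpow : 2 ^ (l.length - 2) ≤ l.dropLast.sum) :
    IsMPartition l.dropLast.sum l.dropLast := by
  obtain ⟨hne, hsort, hpos, hsum, hc, -⟩ := h
  have hdl : l.dropLast.length = l.length - 1 := List.length_dropLast
  refine ⟨?_, hsort.sublist (List.dropLast_sublist l), ?_, rfl, ?_, ?_⟩
  · intro hcon
    have := congrArg List.length hcon
    simp only [hdl, List.length_nil] at this
    omega
  · exact fun x hx => hpos x ((List.dropLast_sublist l).subset hx)
  · intro i hi
    have hi' : i < l.length := by omega
    have hget : l.dropLast.get ⟨i, hi⟩ = l.get ⟨i, hi'⟩ := by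
      simp [List.getElem_dropLast]
    have htake : l.dropLast.take i = l.take i := by
      rw [List.dropLast_eq_take, List.take_take]
      congr 1
      omega
    rw [hget, htake]
    exact hc i hi'
  · rw [hdl]
    have h12 : l.length - 1 - 1 = l.length - 2 := by omega
    rw [h12]
    exact hpow

-- (6) appending the largest part
lemma MP.append {m n j : ℕ} {l : List ℕ} (h : IsMPartition j l) (hln : l.length = n)
    (hn : 1 ≤ n) (hj1 : m / 2 ≤ j) (hj2 : j ≤ 2 ^ n - 1)
    (hml : 2 ^ n + 2 ^ (n - 1) - 1 ≤ m) :
    IsMPartition m (l ++ [m - j]) := by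
  have hpow : 2 ^ n = 2 * 2 ^ (n - 1) := by
    rw [← pow_succ']
    congr 1
    omega
  have h1 : (1:ℕ) ≤ 2 ^ (n - 1) := Nat.one_le_two_pow
  obtain ⟨hne, hsort, hpos, hsum, hc, hp⟩ := h
  have hjm : j < m := by omega
  have hx2 : ∀ x ∈ l, x ≤ m - j := by
    intro x hx
    have := MP.two_mul_le ⟨hne, hsort, hpos, hsum, hc, hp⟩ hx
    omega
  refine ⟨by simp, ?_, ?_, ?_, ?_, ?_⟩
  · rw [List.pairwise_append]
    exact ⟨hsort, by simp, fun x hx y hy => by simp at hy; subst hy; exact hx2 x hx⟩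
  · intro x hx
    rcases List.mem_append.1 hx with h' | h'
    · exact hpos x h'
    · simp at h'; omega
  · rw [List.sum_append]
    simp
    omega
  · intro i hi
    have hi2 : i < l.length + 1 := by simpa using hi
    by_cases hil : i < l.length
    · have hget : (l ++ [m - j]).get ⟨i, hi⟩ = l.get ⟨i, hil⟩ := by
        simp [List.getElem_append_left hil]
      have htake : (l ++ [m - j]).take i = l.take i :=
        List.take_append_of_le_length (by omega)
      rw [hget, htake]
      exact hc i hil
    · have hieq : i = l.length := by omega
      subst hieq
      have hget : (l ++ [m - j]).get ⟨l.length, hi⟩ = m - j := by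
        simp
      have htake : (l ++ [m - j]).take l.length = l := by
        rw [List.take_append_of_le_length le_rfl, List.take_length]
      rw [hget, htake, hsum]
      omega
  · simp only [List.length_append, List.length_singleton]
    have : l.length + 1 - 1 = n := by omega
    rw [this]
    omega

-- finiteness
instance MP.finite (k : ℕ) : Finite {l : List ℕ // IsMPartition k l} := by
  have hinj : Function.Injective (fun (l : {l : List ℕ // IsMPartition k l}) =>
      (⟨(l.1 : Multiset ℕ), fun {x} hx => l.2.2.2.1 x (by simpa using hx),
        by simpa using l.2.2.2.2.1⟩ : Nat.Partition k)) := by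
    intro a b hab
    apply Subtype.ext
    have h : (a.1 : Multiset ℕ) = b.1 := congrArg Nat.Partition.parts hab
    exact List.Perm.eq_of_pairwise' a.2.2.1 b.2.2.1 (Quotient.exact h)
  exact Finite.of_injective _ hinj

-- key forward lemma
lemma MP.mem_and_drop {m n : ℕ} (hn : 1 ≤ n)
    (hml : 2 ^ n + 2 ^ (n - 1) - 1 ≤ m) (hmu : m < 2 ^ (n + 1))
    {l : List ℕ} (hl : IsMPartition m l) :
    (l.dropLast.sum ∈ Finset.Icc (m / 2) (2 ^ n - 1)) ∧
      IsMPartition l.dropLast.sum l.dropLast ∧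
      l.dropLast ++ [m - l.dropLast.sum] = l := by
  have h1 : (1:ℕ) ≤ 2 ^ (n - 1) := Nat.one_le_two_pow
  have hpow : 2 ^ n = 2 * 2 ^ (n - 1) := by
    rw [← pow_succ']; congr 1; omega
  have hpow2 : 2 ^ (n+1) = 2 * 2 ^ n := by ring
  have hmn : 2 ^ n ≤ m := by omega
  have hlen : l.length = n + 1 := MP.length_eq hl hmn hmu
  obtain ⟨hne, hsort, hpos, hsum, hc, hp⟩ := hl
  have hdt : l.dropLast = l.take n := by
    rw [List.dropLast_eq_take, hlen]
    congr 1
  have hnl : n < l.length := by omega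
  have hsplit : (l.take n).sum + l[n] = m := by
    have h := List.sum_take_succ l n hnl
    rw [show n + 1 = l.length by omega, List.take_length] at h
    omega
  have hju : (l.take n).sum ≤ 2 ^ n - 1 := MP.take_sum_le hc n
  have hgc : l[n] ≤ 1 + (l.take n).sum := by
    have := hc n hnl
    simpa using this
  have hmem : (l.take n).sum ∈ Finset.Icc (m / 2) (2 ^ n - 1) := by
    rw [Finset.mem_Icc]
    constructor
    · omega
    · exact hju
  refine ⟨hdt ▸ hmem, ?_, ?_⟩
  · have := MP.dropLast ⟨hne, hsort, hpos, hsum, hc, hp⟩ (by omega) ?_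
    · exact this
    · rw [hdt, hlen]
      have : n + 1 - 2 = n - 1 := by omega
      rw [this]
      omega
  · have hglast : l.getLast hne = l[n] := by
      rw [List.getLast_eq_getElem]
      congr 1
      omega
    have ha : m - (l.take n).sum = l[n] := by omega
    have hfin := List.dropLast_append_getLast hne
    rw [hglast, ← ha, hdt] at hfin
    rw [hdt]
    exact hfin

-- key reverse lemma
lemma MP.mem_append {m n j : ℕ} (hn : 1 ≤ n)
    (hml : 2 ^ n + 2 ^ (n - 1) - 1 ≤ m)
    (hj : j ∈ Finset.Icc (m / 2) (2 ^ n - 1))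
    {l : List ℕ} (hl : IsMPartition j l) :
    IsMPartition m (l ++ [m - j]) := by
  rw [Finset.mem_Icc] at hj
  have h1 : (1:ℕ) ≤ 2 ^ (n - 1) := Nat.one_le_two_pow
  have hpow : 2 ^ n = 2 * 2 ^ (n - 1) := by
    rw [← pow_succ']; congr 1; omega
  have hjl : 2 ^ (n - 1) ≤ j := by omega
  have hju : j < 2 ^ n := by omega
  have hln : l.length = n := by
    have h := MP.length_eq hl hjl (by rw [show n - 1 + 1 = n by omega]; exact hju)
    omega
  exact MP.append hl hln hn hj.1 hj.2 hml

-- sigma extensionality helper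
lemma MP.sigma_ext {s : Finset ℕ} {P : ℕ → List ℕ → Prop}
    (p q : (j : s) × {l : List ℕ // P j l})
    (h1 : (p.1 : ℕ) = (q.1 : ℕ)) (h2 : p.2.1 = q.2.1) : p = q := by
  obtain ⟨⟨j, hj⟩, ⟨l, hl⟩⟩ := p
  obtain ⟨⟨j', hj'⟩, ⟨l', hl'⟩⟩ := q
  simp only at h1 h2
  subst h1; subst h2
  rfl

/-- For 2^n + 2^{n−1} − 1 ≤ m < 2^{n+1} (n ≥ 1),
a_m = ∑_{j=⌊m/2⌋}^{2^n − 1} a_j. -/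
theorem simple_count (m n : ℕ) (hm : 0 < m) (hn : 1 ≤ n)
    (hml : 2 ^ n + 2 ^ (n - 1) - 1 ≤ m) (hmu : m < 2 ^ (n + 1)) :
    numMPartitions m = ∑ j ∈ Finset.Icc (m / 2) (2 ^ n - 1), numMPartitions j := by
  classical
  set s : Finset ℕ := Finset.Icc (m / 2) (2 ^ n - 1) with hs
  let e : {l : List ℕ // IsMPartition m l} ≃
      ((j : s) × {l : List ℕ // IsMPartition (j : ℕ) l}) :=
    { toFun := fun p =>
        ⟨⟨p.1.dropLast.sum, (MP.mem_and_drop hn hml hmu p.2).1⟩,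
          ⟨p.1.dropLast, (MP.mem_and_drop hn hml hmu p.2).2.1⟩⟩
      invFun := fun q =>
        ⟨q.2.1 ++ [m - q.1], MP.mem_append hn hml q.1.2 q.2.2⟩
      left_inv := fun p => Subtype.ext (MP.mem_and_drop hn hml hmu p.2).2.2
      right_inv := fun q => by
        obtain ⟨⟨j, hj⟩, ⟨l, hl⟩⟩ := q
        apply MP.sigma_ext
        · simp only
          rw [List.dropLast_concat]
          exact hl.2.2.2.1
        · simp only
          rw [List.dropLast_concat] }
  letI : ∀ j : s, Fintype {l : List ℕ // IsMPartition (j : ℕ) l} := fun j => Fintype.ofFinite _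
  letI : Fintype {l : List ℕ // IsMPartition m l} := Fintype.ofFinite _
  rw [numMPartitions, Nat.card_eq_fintype_card, Fintype.card_congr e, Fintype.card_sigma]
  rw [← Finset.sum_coe_sort s (fun j => numMPartitions j)]
  apply Finset.sum_congr rfl
  intro j _
  rw [numMPartitions, Nat.card_eq_fintype_card]
end

section
/- For even m with 2^n + 2^{n−1} ≤ m < 2^{n+1}, the number of M-partitions satisfies a_m = a_{m+1}. -/
lemma getLast!_concat' (t : List ℕ) (b : ℕ) : (t ++ [b]).getLast! = b :=
  List.getLast!_of_getLast? (by simp)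

lemma decomp (l : List ℕ) (h : l ≠ []) : l.dropLast ++ [l.getLast!] = l := by
  induction l using List.reverseRecOn with
  | nil => simp at h
  | append_singleton t b _ => simp [getLast!_concat']

lemma take_concat_le (t : List ℕ) (b : ℕ) {i : ℕ} (h : i ≤ t.length) :
    (t ++ [b]).take i = t.take i := List.take_eq_left_iff.2 (Or.inr h)

/-- restriction of the prefix condition -/
lemma cond_restrict {t : List ℕ} {b : ℕ}
    (h : ∀ i, (hi : i < (t ++ [b]).length) →
      (t ++ [b]).get ⟨i, hi⟩ ≤ 1 + ((t ++ [b]).take i).sum) :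
    ∀ i, (hi : i < t.length) → t.get ⟨i, hi⟩ ≤ 1 + (t.take i).sum := by
  intro i hi
  have h2 := h i (by simp; omega)
  simp only [List.get_eq_getElem] at h2 ⊢
  rwa [List.getElem_append_left hi, take_concat_le t b (le_of_lt hi)] at h2

lemma cond_last {t : List ℕ} {b : ℕ}
    (h : ∀ i, (hi : i < (t ++ [b]).length) →
      (t ++ [b]).get ⟨i, hi⟩ ≤ 1 + ((t ++ [b]).take i).sum) :
    b ≤ 1 + t.sum := by
  have h2 := h t.length (by simp)
  simp only [List.get_eq_getElem] at h2
  rw [take_concat_le t b (le_refl _), List.take_length] at h2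
  simpa using h2

/-- sum bound from the prefix condition -/
lemma sum_bound : ∀ (l : List ℕ),
    (∀ i, (hi : i < l.length) → l.get ⟨i, hi⟩ ≤ 1 + (l.take i).sum) →
    l.sum + 1 ≤ 2 ^ l.length := by
  intro l
  induction l using List.reverseRecOn with
  | nil => simp
  | append_singleton t b ih =>
    intro h
    have ht := ih (cond_restrict h)
    have hb := cond_last h
    simp only [List.sum_append, List.sum_cons, List.sum_nil, List.length_append,
      List.length_cons, List.length_nil, pow_succ]
    omega

/-- forward map: increment the last part -/
lemma forward {m : ℕ} (hm : 3 ≤ m) (heven : Even m) {t : List ℕ} {b : ℕ}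
    (h : IsMPartition m (t ++ [b])) : IsMPartition (m + 1) (t ++ [b + 1]) := by
  obtain ⟨-, hsort, hpos, hsum, hcond, hlen⟩ := h
  simp only [List.sum_append, List.sum_cons, List.sum_nil, add_zero] at hsum
  have hb := cond_last hcond
  have hb' : b ≤ t.sum := by
    rcases heven with ⟨c, hc⟩
    omega
  have hsort' := List.pairwise_append.1 hsort
  refine ⟨by simp, ?_, ?_, (by simp; omega), ?_, by simpa using hlen.trans (by omega)⟩
  · refine List.pairwise_append.2 ⟨hsort'.1, by simp, fun x hx y hy => ?_⟩
    have := hsort'.2.2 x hx b (by simp)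
    simp at hy
    omega
  · intro x hx
    simp only [List.mem_append, List.mem_singleton] at hx
    rcases hx with hx | hx
    · exact hpos x (by simp [hx])
    · omega
  · intro i hi
    rcases lt_or_ge i t.length with hi' | hi'
    · have h2 := hcond i (by simp; omega)
      simp only [List.get_eq_getElem] at h2 ⊢
      rw [List.getElem_append_left hi', take_concat_le t b (le_of_lt hi')] at h2
      rwa [List.getElem_append_left hi', take_concat_le t (b+1) (le_of_lt hi')]
    · have : i = t.length := by simp at hi; omega
      subst this
      simp only [List.get_eq_getElem, take_concat_le t (b+1) (le_refl _), List.take_length]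
      simp only [List.getElem_concat_length]
      omega

/-- backward map: decrement the last part -/
lemma backward {m n : ℕ} (hn : 1 ≤ n) (heven : Even m)
    (hml : 2 ^ n + 2 ^ (n - 1) ≤ m) (hmu : m < 2 ^ (n + 1)) {t : List ℕ} {b : ℕ}
    (h : IsMPartition (m + 1) (t ++ [b])) :
    IsMPartition m (t ++ [b - 1]) ∧ 2 ≤ b := by
  obtain ⟨-, hsort, hpos, hsum, hcond, hlen⟩ := h
  simp only [List.sum_append, List.sum_cons, List.sum_nil, add_zero] at hsum
  have hb := cond_last hcond
  have hm3 : 3 ≤ m := by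
    have h1 : 2 ≤ 2 ^ n := Nat.one_lt_two_pow (by omega)
    have h2 : 1 ≤ 2 ^ (n - 1) := Nat.one_le_two_pow
    omega
  have hsort' := List.pairwise_append.1 hsort
  have htne : t ≠ [] := by
    rintro rfl
    simp at hsum hb
    omega
  have hsumb := sum_bound (t ++ [b]) hcond
  simp only [List.sum_append, List.sum_cons, List.sum_nil, add_zero, zero_add,
    List.length_append, List.length_cons, List.length_nil,
    Nat.add_sub_cancel] at hsumb hlen
  have hlength : t.length = n := by
    by_contra hne
    rcases lt_or_gt_of_ne hne with hlt | hgt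
    · have hA : (2:ℕ) ^ (t.length + 1) ≤ 2 ^ n := Nat.pow_le_pow_right (by norm_num) (by omega)
      have h2 : 2 ^ (n-1) ≤ 2 ^ n := Nat.pow_le_pow_right (by norm_num) (by omega)
      clear hmu hlen
      generalize (2:ℕ) ^ (t.length + 1) = P1 at hA hsumb
      generalize (2:ℕ) ^ n = P2 at hA h2 hml
      generalize (2:ℕ) ^ (n - 1) = P3 at h2 hml
      omega
    · have hA : (2:ℕ) ^ (n + 1) ≤ 2 ^ t.length := Nat.pow_le_pow_right (by norm_num) (by omega)
      have hdvd : 2 ∣ 2 ^ (n + 1) := dvd_pow_self 2 (by omega)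
      rcases heven with ⟨d, hd⟩
      clear hml hsumb
      generalize (2:ℕ) ^ (n + 1) = P1 at hA hmu hdvd
      generalize (2:ℕ) ^ t.length = P2 at hA hlen
      omega
  obtain ⟨u, c, rfl⟩ : ∃ u c, t = u ++ [c] :=
    ⟨t.dropLast, t.getLast!, (decomp t htne).symm⟩
  simp only [List.sum_append, List.sum_cons, List.sum_nil, add_zero, zero_add,
    List.length_append, List.length_cons, List.length_nil] at hsum hlength hsumb hlen hb
  have hcb : c + 1 ≤ b := by
    by_contra hcb
    have hcb' : c ≤ b := hsort'.2.2 c (by simp) b (by simp)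
    have hbc2 : b = c := by omega
    subst hbc2
    have hu := sum_bound u (cond_restrict (cond_restrict hcond))
    have hcl := cond_last (cond_restrict (t := u ++ [b]) (b := b) hcond)
    have hul : u.length = n - 1 := by omega
    rw [hul] at hu
    have hpow : 2 ^ (n - 1) + 2 ^ (n - 1) = 2 ^ n := by
      rw [← two_mul, ← pow_succ']
      congr 1
      omega
    clear hmu hlen hsumb
    generalize (2:ℕ) ^ n = P1 at hml hpow
    generalize (2:ℕ) ^ (n - 1) = P2 at hml hpow hu
    omega
  have hbpos : 2 ≤ b := by
    have : 0 < c := hpos c (by simp)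
    omega
  refine ⟨⟨by simp, ?_, ?_, (by simp; omega), ?_, ?_⟩, hbpos⟩
  · refine List.pairwise_append.2 ⟨hsort'.1, by simp, fun x hx y hy => ?_⟩
    have hxc : x ≤ c := by
      rcases List.mem_append.1 hx with hx | hx
      · exact (List.pairwise_append.1 hsort'.1).2.2 x hx c (by simp)
      · simp at hx; omega
    simp at hy
    omega
  · intro x hx
    simp only [List.mem_append, List.mem_singleton] at hx
    rcases hx with (hx | hx) | hx
    · exact hpos x (by simp [hx])
    · exact hpos x (by simp [hx])
    · have : 0 < c := hpos c (by simp)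
      omega
  · intro i hi
    rcases lt_or_ge i (u ++ [c]).length with hi' | hi'
    · have h2 := hcond i (by simp at hi' ⊢; omega)
      simp only [List.get_eq_getElem] at h2 ⊢
      rw [List.getElem_append_left hi', take_concat_le _ b (le_of_lt hi')] at h2
      rwa [List.getElem_append_left hi', take_concat_le _ (b-1) (le_of_lt hi')]
    · have : i = (u ++ [c]).length := by
        clear hml hmu hlen hsumb hcond
        simp only [List.length_append, List.length_cons, List.length_nil] at hi hi' ⊢
        omega
      subst this
      simp only [List.get_eq_getElem, take_concat_le _ (b-1) (le_refl _), List.take_length,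
        List.getElem_concat_length, List.sum_append, List.sum_cons, List.sum_nil, add_zero]
      clear hml hmu hlen hsumb hcond
      omega
  · simp only [List.length_append, List.length_cons, List.length_nil,
      Nat.add_sub_cancel] at hlen ⊢
    have hdvd : 2 ∣ 2 ^ (u.length + 1) := dvd_pow_self 2 (by omega)
    rcases heven with ⟨d, hd⟩
    clear hml hmu hsumb
    generalize (2:ℕ) ^ (u.length + 1) = P1 at hlen hdvd ⊢
    omega

/-- For even m with 2^n + 2^{n−1} ≤ m < 2^{n+1} (n ≥ 1),
a_m = a_{m+1}. -/
theorem even_count_eq (m n : ℕ) (hn : 1 ≤ n) (heven : Even m)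
    (hml : 2 ^ n + 2 ^ (n - 1) ≤ m) (hmu : m < 2 ^ (n + 1)) :
    numMPartitions m = numMPartitions (m + 1) := by
  have hm3 : 3 ≤ m := by
    have h1 : 2 ≤ 2 ^ n := Nat.one_lt_two_pow (by omega)
    have h2 : 1 ≤ 2 ^ (n - 1) := Nat.one_le_two_pow
    omega
  refine Nat.card_congr (Equiv.mk
    (fun x => ⟨x.1.dropLast ++ [x.1.getLast! + 1], ?_⟩)
    (fun y => ⟨y.1.dropLast ++ [y.1.getLast! - 1], ?_⟩) ?_ ?_)
  · obtain ⟨l, hl⟩ := x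
    have hd := decomp l hl.1
    exact forward hm3 heven (t := l.dropLast) (b := l.getLast!) (by rwa [hd])
  · obtain ⟨l, hl⟩ := y
    have hd := decomp l hl.1
    exact (backward hn heven hml hmu (t := l.dropLast) (b := l.getLast!) (by rwa [hd])).1
  · rintro ⟨l, hl⟩
    apply Subtype.ext
    simp only [List.dropLast_concat, getLast!_concat', Nat.add_sub_cancel]
    exact decomp l hl.1
  · rintro ⟨l, hl⟩
    apply Subtype.ext
    have hd := decomp l hl.1
    have hb2 := (backward hn heven hml hmu (t := l.dropLast) (b := l.getLast!)
      (by rwa [hd])).2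
    simp only [List.dropLast_concat, getLast!_concat']
    rw [Nat.sub_add_cancel (by omega)]
    exact hd
end

section
/- Let m, m⁽¹⁾, m⁽¹²⁾ be positive integers with 2^n ≤ m < 2^{n+1}, ⌊m/2⌋ ≤ m⁽¹⁾ ≤ min{⌊(m + 2^{n−1} − 1)/2⌋, 2^n − 1}, ⌊m⁽¹⁾/2⌋ ≤ m⁽¹²⁾ ≤ 2^{n−1} − 1, and m⁽¹⁾ − m⁽¹²⁾ > m − m⁽¹⁾. If λ₀ + ⋯ + λ_{n−2} is an M-partition of m⁽¹²⁾, then λ_{n−2} < m⁽¹⁾ − m⁽¹²⁾. -/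
/-- Under the stated conditions on m, m⁽¹⁾, m⁽¹²⁾, if
λ₀ + ⋯ + λ_{n−2} is an M-partition of m⁽¹²⁾ then λ_{n−2} < m⁽¹⁾ − m⁽¹²⁾. -/
theorem largest_part_small (m m1 m12 n : ℕ) (hn : 2 ≤ n)
    (hm : 0 < m) (hm1 : 0 < m1) (hm12 : 0 < m12)
    (hml : 2 ^ n ≤ m) (hmu : m < 2 ^ (n + 1))
    (hm1l : m / 2 ≤ m1)
    (hm1u : m1 ≤ min ((m + 2 ^ (n - 1) - 1) / 2) (2 ^ n - 1))
    (hm12l : m1 / 2 ≤ m12) (hm12u : m12 ≤ 2 ^ (n - 1) - 1)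
    (hgap : m1 - m12 > m - m1)
    (lam : ℕ → ℕ)
    (hpos : ∀ i ≤ n - 2, 0 < lam i)
    (hmono : ∀ i j, i ≤ j → j ≤ n - 2 → lam i ≤ lam j)
    (hsum : ∑ i ∈ Finset.range (n - 2 + 1), lam i = m12)
    (hineq : ∀ i ≤ n - 2, lam i ≤ 1 + ∑ j ∈ Finset.range i, lam j)
    (hbig : 2 ^ (n - 2) ≤ m12) :
    lam (n - 2) < m1 - m12 := by
  have hs : ∑ i ∈ Finset.range (n - 2) , lam i + lam (n - 2) = m12 := by
    rw [← Finset.sum_range_succ]; exact hsum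
  have hA := hineq (n - 2) le_rfl
  have h2n : 2 ^ (n - 1) * 2 = 2 ^ n := by
    rw [← pow_succ]; congr 1; omega
  have key : 2 ^ (n - 1) ≤ m1 := le_of_lt (by
    by_contra h
    push_neg at h
    omega)
  omega
end
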